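/- Let ψ be a lsc convex function on R^d with ∇ψ♯U_d = P, where P has density p supported on an open convex set X ⊆ R^d satisfying λ_R ≤ p ≤ Λ_R on X ∩ RB_d for every R. Then for any compact M ⊂ B_d there exist constants α_M, A_M > 0 such that for every Borel A ⊆ M, α_M ℓ_d(A) ≤ μ_ψ(A) ≤ A_M (ℓ_d(A))^{1/d}, where μ_ψ(A) = ℓ_d(∂ψ(A)). -/

import Mathlib

open Metric MeasureTheory Real Classical
open RealInnerProductSpace
open scoped ENNReal

section Aux

open Filter Set Topology

variable {d : ℕ}
local notation "E" => EuclideanSpace ℝ (Fin d)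

lemma inner_gradient_eq (f : E → ℝ) (x v : E) : ⟪gradient f x, v⟫ = fderiv ℝ f x v := by
  rw [gradient]; exact InnerProductSpace.toDual_symm_apply

lemma measurable_gradient (f : E → ℝ) : Measurable (gradient f) := by
  have : Continuous ((InnerProductSpace.toDual ℝ E).symm : StrongDual ℝ E → E) :=
    (InnerProductSpace.toDual ℝ E).symm.continuous
  exact this.measurable.comp (measurable_fderiv ℝ f)

lemma slope_tendsto (g : E → ℝ) (z v : E) (h : DifferentiableAt ℝ g z) :
    Tendsto (fun t : ℝ => (g (z + t • v) - g z) / t) (𝓝[>] (0:ℝ))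
      (𝓝 (fderiv ℝ g z v)) := by
  have hl : HasDerivAt (fun t : ℝ => z + t • v) v 0 := by
    simpa using ((hasDerivAt_id (0:ℝ)).smul_const v).const_add z
  have hfd : HasFDerivAt g (fderiv ℝ g z) (z + (0:ℝ) • v) := by
    simpa using h.hasFDerivAt
  have hc : HasDerivAt (fun t : ℝ => g (z + t • v)) (fderiv ℝ g z v) 0 := by
    exact hfd.comp_hasDerivAt (0:ℝ) hl
  have h2 : Tendsto (slope (fun t : ℝ => g (z + t • v)) 0) (𝓝[>] (0:ℝ))
      (𝓝 (fderiv ℝ g z v)) :=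
    (hasDerivAt_iff_tendsto_slope.1 hc).mono_left (nhdsWithin_mono _ (fun t ht => ne_of_gt ht))
  refine h2.congr (fun t => ?_)
  rw [slope_def_field]
  simp [div_eq_div_iff]

/-- At a differentiability point, the gradient of a convex function is a subgradient. -/
lemma grad_mem_subgrad {ψ : E → ℝ} (hψ : ConvexOn ℝ Set.univ ψ)
    {x : E} (hx : DifferentiableAt ℝ ψ x) (w : E) :
    ψ x + ⟪gradient ψ x, w - x⟫ ≤ ψ w := by
  have key : fderiv ℝ ψ x (w - x) ≤ ψ w - ψ x := by
    refine le_of_tendsto (slope_tendsto ψ x (w - x) hx) ?_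
    filter_upwards [Ioo_mem_nhdsGT_of_mem (by norm_num : (0:ℝ) ∈ Ico (0:ℝ) 1)] with t ht
    rcases ht with ⟨ht0, ht1⟩
    rw [div_le_iff₀ ht0]
    have hcomb := hψ.2 (Set.mem_univ x) (Set.mem_univ w)
      (by linarith : (0:ℝ) ≤ 1 - t) ht0.le (by ring)
    have hpt : (1 - t) • x + t • w = x + t • (w - x) := by
      simp [smul_sub, sub_smul]; abel
    rw [hpt] at hcomb
    simp only [smul_eq_mul] at hcomb
    nlinarith [hcomb]
  have := inner_gradient_eq ψ x (w - x)
  linarith [key, this.le, this.ge]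

/-- Subgradient uniqueness at differentiability points. -/
lemma subgrad_eq_gradient {g : E → ℝ} {z x : E} (hdiff : DifferentiableAt ℝ g z)
    (h : ∀ z', g z + ⟪x, z' - z⟫ ≤ g z') : x = gradient g z := by
  have key : ∀ v : E, ⟪x, v⟫ ≤ fderiv ℝ g z v := by
    intro v
    refine ge_of_tendsto (slope_tendsto g z v hdiff) ?_
    filter_upwards [self_mem_nhdsWithin] with t ht
    have := h (z + t • v)
    simp only [add_sub_cancel_left, real_inner_smul_right] at this
    rw [le_div_iff₀ ht]
    linarith [this]
  have keq : ∀ v : E, ⟪x, v⟫ = fderiv ℝ g z v := by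
    intro v
    have h1 := key v
    have h2 := key (-v)
    simp only [inner_neg_right, map_neg] at h2
    linarith
  have : ∀ v : E, ⟪x - gradient g z, v⟫ = 0 := by
    intro v
    rw [inner_sub_left, inner_gradient_eq, keq v, sub_self]
  have := this (x - gradient g z)
  rwa [inner_self_eq_zero, sub_eq_zero] at this


/-- Localized Legendre transform. -/
noncomputable def lconj (ψ : E → ℝ) (z : E) : ℝ :=
  sSup ((fun w => ⟪z, w⟫ - ψ w) '' closedBall (0:E) 1)

lemma lconj_bddAbove {ψ : E → ℝ} (hc : Continuous ψ) (z : E) :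
    BddAbove ((fun w => ⟪z, w⟫ - ψ w) '' closedBall (0:E) 1) :=
  (((isCompact_closedBall (0:E) 1).image
    (((continuous_const.inner continuous_id).sub hc)))).bddAbove

lemma lconj_le {ψ : E → ℝ} (z : E) {c : ℝ}
    (h : ∀ w ∈ closedBall (0:E) 1, ⟪z, w⟫ - ψ w ≤ c) : lconj ψ z ≤ c := by
  apply csSup_le (Set.Nonempty.image _ ⟨0, by simp⟩)
  rintro y ⟨w, hw, rfl⟩; exact h w hw

lemma le_lconj {ψ : E → ℝ} (hc : Continuous ψ) {w : E} (hw : w ∈ closedBall (0:E) 1) (z : E) :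
    ⟪z, w⟫ - ψ w ≤ lconj ψ z :=
  le_csSup (lconj_bddAbove hc z) (Set.mem_image_of_mem _ hw)

lemma lconj_lipschitz {ψ : E → ℝ} (hc : Continuous ψ) : LipschitzWith 1 (lconj ψ) := by
  refine LipschitzWith.of_dist_le_mul (fun z z' => ?_)
  rw [Real.dist_eq, NNReal.coe_one, one_mul, abs_sub_le_iff]
  have key : ∀ y y' : E, lconj ψ y - lconj ψ y' ≤ ‖y - y'‖ := by
    intro y y'
    rw [sub_le_iff_le_add]
    refine lconj_le y (fun w hw => ?_)
    have h1 : ⟪y', w⟫ - ψ w ≤ lconj ψ y' := le_lconj hc hw y'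
    have h3 : ‖w‖ ≤ 1 := by simpa using hw
    have h4 : ⟪y, w⟫ - ⟪y', w⟫ ≤ ‖y - y'‖ := by
      rw [← inner_sub_left]
      calc ⟪y - y', w⟫ ≤ ‖y - y'‖ * ‖w‖ := real_inner_le_norm _ _
        _ ≤ ‖y - y'‖ * 1 := mul_le_mul_of_nonneg_left h3 (norm_nonneg _)
        _ = ‖y - y'‖ := mul_one _
    linarith
  constructor
  · have := key z z'; rwa [← dist_eq_norm z z'] at this
  · have := key z' z; rwa [← dist_eq_norm' z z'] at this

/-- If `z` is a subgradient of `ψ` at `x ∈ closedBall 0 1`, then `x` is a subgradient of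
the localized conjugate at `z`. -/
lemma lconj_subgrad {ψ : E → ℝ} (hc : Continuous ψ) {x z : E} (hx : x ∈ closedBall (0:E) 1)
    (hz : ∀ w, ψ x + ⟪z, w - x⟫ ≤ ψ w) (z' : E) :
    lconj ψ z + ⟪x, z' - z⟫ ≤ lconj ψ z' := by
  have h1 : lconj ψ z ≤ ⟪z, x⟫ - ψ x := by
    refine lconj_le z (fun w hw => ?_)
    have := hz w
    rw [inner_sub_right] at this
    linarith
  have h2 : ⟪z', x⟫ - ψ x ≤ lconj ψ z' := le_lconj hc hx z'
  have h3 : ⟪x, z' - z⟫ = ⟪z', x⟫ - ⟪z, x⟫ := by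
    rw [inner_sub_right, real_inner_comm x z', real_inner_comm x z]
  linarith


lemma convexOn_continuous {ψ : E → ℝ} (hψ : ConvexOn ℝ Set.univ ψ) : Continuous ψ := by
  have := hψ.continuousOn isOpen_univ
  rwa [continuousOn_univ] at this

/-- Subgradients at points of the closed unit ball are uniformly bounded. -/
lemma subgrad_norm_bound {ψ : E → ℝ} (hψ : ConvexOn ℝ Set.univ ψ) :
    ∃ K : ℝ, 0 < K ∧ ∀ x ∈ closedBall (0:E) 1, ∀ z : E,
      (∀ w, ψ x + ⟪z, w - x⟫ ≤ ψ w) → ‖z‖ ≤ K := by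
  have hc := convexOn_continuous hψ
  obtain ⟨C, hC⟩ := (isCompact_closedBall (0:E) 2).exists_bound_of_continuousOn hc.continuousOn
  have hC0 : 0 ≤ C := le_trans (norm_nonneg _) (hC 0 (by simp))
  refine ⟨2 * C + 1, by linarith, fun x hx z hz => ?_⟩
  rcases eq_or_ne z 0 with rfl | hz0
  · simp; linarith
  · set w := x + ‖z‖⁻¹ • z with hw
    have hwball : w ∈ closedBall (0:E) 2 := by
      rw [mem_closedBall, dist_zero_right]
      calc ‖x + ‖z‖⁻¹ • z‖ ≤ ‖x‖ + ‖‖z‖⁻¹ • z‖ := norm_add_le _ _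
        _ ≤ 1 + 1 := by
            gcongr
            · simpa using hx
            · rw [norm_smul, norm_inv, norm_norm]
              rw [inv_mul_cancel₀ (norm_ne_zero_iff.2 hz0)]
        _ = 2 := by norm_num
    have hinner : ⟪z, w - x⟫ = ‖z‖ := by
      rw [hw, add_sub_cancel_left, real_inner_smul_right, real_inner_self_eq_norm_sq]
      rw [sq]
      field_simp
    have h1 := hz w
    rw [hinner] at h1
    have h2 : ‖ψ w‖ ≤ C := hC w hwball
    have h3 : ‖ψ x‖ ≤ C := hC x (closedBall_subset_closedBall (by norm_num) hx)
    have := abs_le.1 h2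
    have := abs_le.1 h3
    simp only [Real.norm_eq_abs] at h2 h3
    have h2' := abs_le.1 h2
    have h3' := abs_le.1 h3
    linarith
  
/-- A convex function on `ℝ^d` is a.e. differentiable on the unit ball. -/
lemma convex_ae_diff {ψ : E → ℝ} (hψ : ConvexOn ℝ Set.univ ψ) :
    ∀ᵐ y : E ∂volume, y ∈ ball (0:E) 1 → DifferentiableAt ℝ ψ y := by
  have hc := convexOn_continuous hψ
  have hcb : ConvexOn ℝ (ball (0:E) 2) ψ := hψ.subset (Set.subset_univ _) (convex_ball _ _)
  have hbdd : Bornology.IsBounded (ψ '' ball (0:E) 2) := by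
    refine (((isCompact_closedBall (0:E) 2).image hc).isBounded).subset ?_
    exact Set.image_mono ball_subset_closedBall
  obtain ⟨K, hK⟩ := hcb.exists_lipschitzOnWith_of_isBounded (by norm_num : (3/2:ℝ) < 2) hbdd
  filter_upwards [hK.ae_differentiableWithinAt_of_mem (μ := volume)] with y hy hy1
  have hy32 : y ∈ ball (0:E) (3/2) :=
    ball_subset_ball (by norm_num) hy1
  exact (hy hy32).differentiableAt (isOpen_ball.mem_nhds hy32)


lemma radial_bound (hd : 1 ≤ d) {a : ℝ} (ha : 0 < a) {r : ℝ} (hr : 0 < r) :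
    ∫⁻ x in ball (0:E) r, ENNReal.ofReal (1 / (a * ‖x‖ ^ (d - 1))) ∂volume
      ≤ ENNReal.ofReal (2 ^ d * r / a) * volume (ball (0:E) 1) := by
  haveI : Nontrivial E := by
    refine Module.nontrivial_of_finrank_pos (R := ℝ) ?_
    rw [finrank_euclideanSpace_fin]; omega
  set e := d - 1 with he
  have hde : d = e + 1 := by omega
  set f : E → ℝ≥0∞ := fun x => ENNReal.ofReal (1 / (a * ‖x‖ ^ (d - 1))) with hf
  set S : ℕ → Set E := fun n => ball (0:E) (r * (1/2) ^ n) \ ball (0:E) (r * (1/2) ^ (n+1))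
    with hS
  -- covering
  have hcover : ball (0:E) r \ {0} ⊆ ⋃ n, S n := by
    intro x hx
    obtain ⟨hxr, hx0⟩ := hx
    rw [mem_ball, dist_zero_right] at hxr
    have hx0' : 0 < ‖x‖ := norm_pos_iff.2 hx0
    have hex : ∃ n : ℕ, r * (1/2:ℝ) ^ n ≤ ‖x‖ := by
      obtain ⟨n, hn⟩ := exists_pow_lt_of_lt_one (div_pos hx0' hr) (by norm_num : (1/2:ℝ) < 1)
      exact ⟨n, by rw [mul_comm]; rw [lt_div_iff₀ hr] at hn; linarith⟩
    set n₁ := Nat.find hex with hn₁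
    have hn₁pos : 0 < n₁ := by
      refine Nat.pos_of_ne_zero (fun h => ?_)
      have := Nat.find_spec hex
      rw [← hn₁, h] at this
      simp at this; linarith
    refine Set.mem_iUnion.2 ⟨n₁ - 1, ?_, ?_⟩
    · rw [mem_ball, dist_zero_right]
      have := Nat.find_min hex (m := n₁ - 1) (by omega)
      push_neg at this
      exact this
    · rw [mem_ball, dist_zero_right]
      push_neg
      have := Nat.find_spec hex
      rw [← hn₁] at this
      have hn : n₁ - 1 + 1 = n₁ := by omega
      rw [hn]
      exact this
  -- per-piece bound
  have hpiece : ∀ n : ℕ, ∫⁻ x in S n, f x ∂volume ≤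
      ENNReal.ofReal (2 ^ d * r / a) * ENNReal.ofReal ((1/2:ℝ) ^ (n+1)) *
        volume (ball (0:E) 1) := by
    intro n
    set b := r * (1/2:ℝ) ^ (n+1) with hb
    have hbpos : 0 < b := by positivity
    have h2b : r * (1/2:ℝ) ^ n = 2 * b := by
      rw [hb]; ring
    have hSmeas : MeasurableSet (S n) := measurableSet_ball.diff measurableSet_ball
    have hbound : ∀ x ∈ S n, f x ≤ ENNReal.ofReal (1 / (a * b ^ e)) := by
      intro x hx
      have hxlb : b ≤ ‖x‖ := by
        have := hx.2
        rw [mem_ball, dist_zero_right] at this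
        push_neg at this
        exact this
      rw [hf]
      apply ENNReal.ofReal_le_ofReal
      rw [← he]
      refine one_div_le_one_div_of_le (by positivity) ?_
      exact mul_le_mul_of_nonneg_left (pow_le_pow_left₀ hbpos.le hxlb e) ha.le
    calc ∫⁻ x in S n, f x ∂volume
        ≤ ∫⁻ _ in S n, ENNReal.ofReal (1 / (a * b ^ e)) ∂volume :=
          setLIntegral_mono' hSmeas hbound
      _ = ENNReal.ofReal (1 / (a * b ^ e)) * volume (S n) := setLIntegral_const _ _
      _ ≤ ENNReal.ofReal (1 / (a * b ^ e)) * volume (ball (0:E) (r * (1/2) ^ n)) := by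
          gcongr
          exact diff_subset
      _ = ENNReal.ofReal (1 / (a * b ^ e)) *
            (ENNReal.ofReal ((r * (1/2) ^ n) ^ Module.finrank ℝ
              (EuclideanSpace ℝ (Fin d))) * volume (ball (0:E) 1)) := by
          rw [Measure.addHaar_ball _ _ (by positivity)]
      _ ≤ ENNReal.ofReal (2 ^ d * r / a) * ENNReal.ofReal ((1/2:ℝ) ^ (n+1)) *
            volume (ball (0:E) 1) := by
          rw [← mul_assoc, ← ENNReal.ofReal_mul (by positivity), ← ENNReal.ofReal_mul
            (by positivity)]
          have hbne : b ≠ 0 := hbpos.ne'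
          have hane : a ≠ 0 := ha.ne'
          have hmain : 1 / (a * b ^ e) * (r * (1/2:ℝ) ^ n) ^ Module.finrank ℝ
              (EuclideanSpace ℝ (Fin d)) ≤ 2 ^ d * r / a * (1/2:ℝ) ^ (n+1) := by
            rw [finrank_euclideanSpace_fin, h2b, hde]
            have h1 : (2*b) ^ (e+1) = 2 ^ (e+1) * (b ^ e * b) := by
              rw [mul_pow, pow_succ, pow_succ]
            have hbe : b ^ e ≠ 0 := pow_ne_zero _ hbne
            have heq1 : 1 / (a * b ^ e) * (2*b) ^ (e+1) = 2 ^ (e+1) * b / a := by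
              rw [h1]
              field_simp [hbe]
            have heq2 : (2:ℝ) ^ (e+1) * r / a * (1/2:ℝ) ^ (n+1) = 2 ^ (e+1) * b / a := by
              rw [hb]
              field_simp
            rw [heq1, heq2]
          exact mul_le_mul_left (ENNReal.ofReal_le_ofReal hmain) _
    
  -- sum up
  have hsum : ∑' n : ℕ, ENNReal.ofReal ((1/2:ℝ) ^ (n+1)) = 1 := by
    have hsummable : Summable (fun n : ℕ => ((1/2:ℝ)) ^ (n+1)) := by
      apply Summable.comp_injective (summable_geometric_of_lt_one (by norm_num) (by norm_num))
        (add_left_injective 1)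
    rw [← ENNReal.ofReal_tsum_of_nonneg (fun n => by positivity) hsummable]
    have : ∑' n : ℕ, ((1/2:ℝ)) ^ (n+1) = 1 := by
      have h1 : ∑' n : ℕ, ((1/2:ℝ)) ^ (n+1) = ∑' n : ℕ, (1/2) * ((1/2:ℝ)) ^ n := by
        congr 1; ext n; ring
      rw [h1, tsum_mul_left, tsum_geometric_two]
      norm_num
    rw [this, ENNReal.ofReal_one]
  calc ∫⁻ x in ball (0:E) r, f x ∂volume
      ≤ ∫⁻ x in (ball (0:E) r \ {0}) ∪ {0}, f x ∂volume := by
        apply lintegral_mono_set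
        intro x hx
        by_cases h : x = 0
        · exact Or.inr (by simp [h])
        · exact Or.inl ⟨hx, h⟩
    _ ≤ (∫⁻ x in ball (0:E) r \ {0}, f x ∂volume) + ∫⁻ x in ({0} : Set E), f x ∂volume :=
        lintegral_union_le _ _ _
    _ ≤ (∫⁻ x in ⋃ n, S n, f x ∂volume) + 0 := by
        gcongr
        · apply le_of_eq
          apply setLIntegral_measure_zero
          exact measure_singleton 0
    _ ≤ ∑' n : ℕ, ∫⁻ x in S n, f x ∂volume := by
        rw [add_zero]; exact lintegral_iUnion_le _ _
    _ ≤ ∑' n : ℕ, ENNReal.ofReal (2 ^ d * r / a) * ENNReal.ofReal ((1/2:ℝ) ^ (n+1)) *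
          volume (ball (0:E) 1) := ENNReal.tsum_le_tsum hpiece
    _ = ∑' n : ℕ, (ENNReal.ofReal (2 ^ d * r / a) * volume (ball (0:E) 1)) *
          ENNReal.ofReal ((1/2:ℝ) ^ (n+1)) := by
        congr 1; ext n; ring
    _ = ENNReal.ofReal (2 ^ d * r / a) * volume (ball (0:E) 1) := by
        rw [ENNReal.tsum_mul_left, hsum, mul_one]


end Aux

set_option maxHeartbeats 2000000

/-- Monge–Ampère bounds for the quantile potential: if `∇ψ` pushes the spherical uniform
`U_d` forward to `P` with density `p` supported on an open convex `X` satisfying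
Assumption A, then on every compact `M ⊂ B_d` the Monge–Ampère measure
`A ↦ ℓ_d(∂ψ(A))` satisfies `α_M ℓ_d(A) ≤ μ_ψ(A) ≤ A_M ℓ_d(A)^{1/d}`. -/
theorem monge_ampere_bounds_on_compacts (d : ℕ) (hd : 1 ≤ d)
    (X : Set (EuclideanSpace ℝ (Fin d))) (hXo : IsOpen X) (hXconv : Convex ℝ X)
    (p : EuclideanSpace ℝ (Fin d) → ℝ)
    (hp0 : ∀ x ∉ X, p x = 0)
    (hAssumptionA : ∀ R : ℝ, 0 < R → ∃ lam Lam : ℝ, 0 < lam ∧ lam ≤ Lam ∧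
      ∀ x ∈ X ∩ ball (0 : EuclideanSpace ℝ (Fin d)) R, lam ≤ p x ∧ p x ≤ Lam)
    (a : ℝ) (ha : a = 2 * π ^ ((d : ℝ) / 2) / Gamma ((d : ℝ) / 2))
    (u : EuclideanSpace ℝ (Fin d) → ℝ≥0∞)
    (hu : ∀ x, u x = if x ∈ ball (0 : EuclideanSpace ℝ (Fin d)) 1 \ {0}
      then ENNReal.ofReal (1 / (a * ‖x‖ ^ (d - 1))) else 0)
    (ψ : EuclideanSpace ℝ (Fin d) → ℝ)
    (hψ : ConvexOn ℝ Set.univ ψ) (hψlsc : LowerSemicontinuous ψ)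
    (hpush : Measure.map (gradient ψ) (volume.withDensity u) =
      volume.withDensity fun x => ENNReal.ofReal (p x)) :
    ∀ M : Set (EuclideanSpace ℝ (Fin d)), IsCompact M →
      M ⊆ ball (0 : EuclideanSpace ℝ (Fin d)) 1 →
      ∃ α A_M : ℝ, 0 < α ∧ 0 < A_M ∧
        ∀ A : Set (EuclideanSpace ℝ (Fin d)), A ⊆ M → MeasurableSet A →
          ENNReal.ofReal α * volume A ≤
            volume (⋃ x ∈ A, {z : EuclideanSpace ℝ (Fin d) |
              ∀ w, ψ x + ⟪z, w - x⟫ ≤ ψ w}) ∧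
          volume (⋃ x ∈ A, {z : EuclideanSpace ℝ (Fin d) |
              ∀ w, ψ x + ⟪z, w - x⟫ ≤ ψ w}) ≤
            ENNReal.ofReal A_M * volume A ^ ((1 : ℝ) / d) := by
  intro M hMc hMball
  haveI : Nontrivial (EuclideanSpace ℝ (Fin d)) := by
    refine Module.nontrivial_of_finrank_pos (R := ℝ) ?_
    rw [finrank_euclideanSpace_fin]; omega
  have hc : Continuous ψ := convexOn_continuous hψ
  -- positivity of `a`
  have hΓ : 0 < Gamma ((d : ℝ) / 2) := Real.Gamma_pos_of_pos (by positivity)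
  have ha0 : 0 < a := by rw [ha]; positivity
  -- measurability of `u`
  have humeas : Measurable u := by
    have : u = fun x => if x ∈ ball (0 : (EuclideanSpace ℝ (Fin d))) 1 \ {0}
        then ENNReal.ofReal (1 / (a * ‖x‖ ^ (d - 1))) else 0 := funext hu
    rw [this]
    refine Measurable.ite (measurableSet_ball.diff (measurableSet_singleton 0)) ?_ measurable_const
    exact ENNReal.measurable_ofReal.comp
      (((measurable_norm.pow_const (d-1)).const_mul a).inv.const_mul 1)
  -- subgradient norm bound and the radius R
  obtain ⟨K, hK0, hKb⟩ := subgrad_norm_bound hψ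
  set R : ℝ := K + 1 with hR
  have hR0 : 0 < R := by positivity
  obtain ⟨lam, Lam, hlam, hlamLam, hbounds⟩ := hAssumptionA R hR0
  have hLam : 0 < Lam := lt_of_lt_of_le hlam hlamLam
  -- measures
  set μU : Measure (EuclideanSpace ℝ (Fin d)) := volume.withDensity u with hμU
  set P : Measure (EuclideanSpace ℝ (Fin d)) := volume.withDensity (fun x => ENNReal.ofReal (p x)) with hP
  have hgm : Measurable (gradient ψ) := measurable_gradient ψ
  have hmap : ∀ T : Set (EuclideanSpace ℝ (Fin d)), MeasurableSet T → μU (gradient ψ ⁻¹' T) = P T := by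
    intro T hT
    rw [← hpush, Measure.map_apply hgm hT]
  -- `u ≥ 1/a` on the punctured ball
  have hulb : ∀ x : (EuclideanSpace ℝ (Fin d)), x ∈ ball (0:(EuclideanSpace ℝ (Fin d))) 1 \ {0} → ENNReal.ofReal (1/a) ≤ u x := by
    intro x hx
    rw [hu x, if_pos hx]
    apply ENNReal.ofReal_le_ofReal
    have hx1 : ‖x‖ < 1 := by
      have := hx.1; rwa [mem_ball, dist_zero_right] at this
    have hx0 : 0 < ‖x‖ := norm_pos_iff.2 hx.2
    have hpow : ‖x‖ ^ (d-1) ≤ 1 := pow_le_one₀ hx0.le hx1.le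
    have hpow0 : 0 < ‖x‖ ^ (d-1) := pow_pos hx0 _
    rw [one_div, one_div]
    apply inv_anti₀ (by positivity)
    nlinarith
  -- `u = 0` off the punctured ball
  have huz : ∀ x : (EuclideanSpace ℝ (Fin d)), x ∉ ball (0:(EuclideanSpace ℝ (Fin d))) 1 \ {0} → u x = 0 := by
    intro x hx; rw [hu x, if_neg hx]
  -- `u ≤ g` everywhere
  have huub : ∀ x : (EuclideanSpace ℝ (Fin d)), u x ≤ ENNReal.ofReal (1 / (a * ‖x‖ ^ (d - 1))) := by
    intro x
    rw [hu x]
    split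
    · exact le_rfl
    · exact zero_le
  -- differentiability sets
  set D : Set (EuclideanSpace ℝ (Fin d)) := {y | DifferentiableAt ℝ ψ y} with hD
  have hDmeas : MeasurableSet D := measurableSet_of_differentiableAt ℝ ψ
  have hndiff : volume (ball (0:(EuclideanSpace ℝ (Fin d))) 1 ∩ Dᶜ) = 0 := by
    have h1 := convex_ae_diff hψ
    rw [ae_iff] at h1
    refine measure_mono_null (fun y hy => ?_) h1
    simp only [Set.mem_setOf_eq, Classical.not_imp]
    exact ⟨hy.1, hy.2⟩
  -- gradients lie in X a.e. on the ball
  have hPXc : P Xᶜ = 0 := by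
    rw [hP, withDensity_apply _ hXo.isClosed_compl.measurableSet]
    refine le_antisymm ?_ zero_le
    have : ∀ x ∈ Xᶜ, ENNReal.ofReal (p x) ≤ (0:ℝ≥0∞) := by
      intro x hx; rw [hp0 x hx]; simp
    calc ∫⁻ x in Xᶜ, ENNReal.ofReal (p x) ∂volume
        ≤ ∫⁻ _ in Xᶜ, (0:ℝ≥0∞) ∂volume :=
          setLIntegral_mono' hXo.isClosed_compl.measurableSet this
      _ = 0 := by simp
  have hgradX : volume ((gradient ψ ⁻¹' Xᶜ) ∩ (ball (0:(EuclideanSpace ℝ (Fin d))) 1 \ {0})) = 0 := by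
    have hB : MeasurableSet (gradient ψ ⁻¹' Xᶜ) := hgm hXo.isClosed_compl.measurableSet
    have h0 : μU (gradient ψ ⁻¹' Xᶜ) = 0 := by rw [hmap _ hXo.isClosed_compl.measurableSet, hPXc]
    rw [hμU, withDensity_apply _ hB] at h0
    set B2 := (gradient ψ ⁻¹' Xᶜ) ∩ (ball (0:(EuclideanSpace ℝ (Fin d))) 1 \ {0}) with hB2
    have hB2m : MeasurableSet B2 :=
      hB.inter (measurableSet_ball.diff (measurableSet_singleton 0))
    have hle : ENNReal.ofReal (1/a) * volume B2 ≤ 0 := by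
      calc ENNReal.ofReal (1/a) * volume B2
          = ∫⁻ _ in B2, ENNReal.ofReal (1/a) ∂volume := (setLIntegral_const _ _).symm
        _ ≤ ∫⁻ x in B2, u x ∂volume := setLIntegral_mono' hB2m (fun x hx => hulb x hx.2)
        _ ≤ ∫⁻ x in gradient ψ ⁻¹' Xᶜ, u x ∂volume :=
            lintegral_mono_set Set.inter_subset_left
        _ = 0 := h0
    have := le_antisymm hle zero_le
    rcases mul_eq_zero.1 this with h | h
    · exact absurd h (by simp [ENNReal.ofReal_eq_zero]; positivity)
    · exact h
  -- the full-measure good set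
  set G : Set (EuclideanSpace ℝ (Fin d)) := (ball (0:(EuclideanSpace ℝ (Fin d))) 1 \ {0}) ∩ D ∩ (gradient ψ ⁻¹' X) with hG
  have hGnull : volume (ball (0:(EuclideanSpace ℝ (Fin d))) 1 \ G) = 0 := by
    have hsub : ball (0:(EuclideanSpace ℝ (Fin d))) 1 \ G ⊆
        ({0} : Set (EuclideanSpace ℝ (Fin d))) ∪ (ball (0:(EuclideanSpace ℝ (Fin d))) 1 ∩ Dᶜ) ∪
          ((gradient ψ ⁻¹' Xᶜ) ∩ (ball (0:(EuclideanSpace ℝ (Fin d))) 1 \ {0})) := by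
      intro y hy
      obtain ⟨hyb, hyG⟩ := hy
      by_cases hy0 : y = 0
      · exact Or.inl (Or.inl hy0)
      by_cases hyD : y ∈ D
      · refine Or.inr ⟨?_, hyb, hy0⟩
        intro hyX
        exact hyG ⟨⟨⟨hyb, hy0⟩, hyD⟩, hyX⟩
      · exact Or.inl (Or.inr ⟨hyb, hyD⟩)
    refine measure_mono_null hsub ?_
    refine measure_union_null (measure_union_null ?_ hndiff) hgradX
    exact measure_singleton 0
  -- subdifferentials at interior points lie in the closure of X
  have hsubX : ∀ x ∈ ball (0:(EuclideanSpace ℝ (Fin d))) 1, ∀ z : (EuclideanSpace ℝ (Fin d)),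
      (∀ w, ψ x + ⟪z, w - x⟫ ≤ ψ w) → z ∈ closure X := by
    intro x hx z hz
    by_contra hzX
    obtain ⟨f, cc, hfz, hfX⟩ :=
      geometric_hahn_banach_point_closed hXconv.closure isClosed_closure hzX
    set v : (EuclideanSpace ℝ (Fin d)) := (InnerProductSpace.toDual ℝ (EuclideanSpace ℝ (Fin d))).symm f with hv
    have hfv : ∀ w : (EuclideanSpace ℝ (Fin d)), ⟪v, w⟫ = f w := fun w => InnerProductSpace.toDual_symm_apply
    have hε : 0 < cc - f z := sub_pos.2 hfz
    have hx1 : ‖x‖ < 1 := by rwa [mem_ball, dist_zero_right] at hx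
    set t : ℝ := (1 - ‖x‖) / (2 * (‖v‖ + 1)) with ht
    have ht0 : 0 < t := by
      apply div_pos (by linarith) (by positivity)
    have htv : t * ‖v‖ ≤ (1 - ‖x‖) / 2 := by
      rw [ht, div_mul_eq_mul_div, div_le_div_iff₀ (by positivity) (by norm_num)]
      nlinarith [norm_nonneg v]
    set c0 : (EuclideanSpace ℝ (Fin d)) := x - t • v with hc0
    have hc0ball : ‖c0‖ ≤ ‖x‖ + (1 - ‖x‖)/2 := by
      calc ‖x - t • v‖ ≤ ‖x‖ + ‖t • v‖ := norm_sub_le _ _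
        _ = ‖x‖ + |t| * ‖v‖ := by rw [norm_smul, Real.norm_eq_abs]
        _ = ‖x‖ + t * ‖v‖ := by rw [abs_of_pos ht0]
        _ ≤ ‖x‖ + (1 - ‖x‖)/2 := by linarith
    set δ : ℝ := min ((1 - ‖x‖)/4) (t * (cc - f z) / (2 * (K + ‖z‖ + 1))) with hδ
    have hδ0 : 0 < δ := lt_min (by linarith) (by positivity)
    have hballsub : ball c0 δ ⊆ ball (0:(EuclideanSpace ℝ (Fin d))) 1 := by
      intro y hy
      rw [mem_ball, dist_zero_right]
      rw [mem_ball] at hy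
      have h1 : ‖y - c0‖ < δ := by rwa [← dist_eq_norm]
      have h2 : δ ≤ (1 - ‖x‖)/4 := min_le_left _ _
      calc ‖y‖ = ‖y - c0 + c0‖ := by rw [sub_add_cancel]
        _ ≤ ‖y - c0‖ + ‖c0‖ := norm_add_le _ _
        _ < δ + (‖x‖ + (1 - ‖x‖)/2) := by linarith [hc0ball]
        _ ≤ 1 := by linarith
    -- pick a good point near c0
    have hyex : ∃ y, y ∈ G ∩ ball c0 δ := by
      by_contra hne
      push_neg at hne
      have hsub : ball c0 δ ⊆ ball (0:(EuclideanSpace ℝ (Fin d))) 1 \ G := by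
        intro y hy
        refine ⟨hballsub hy, fun hyG => hne y ⟨hyG, hy⟩⟩
      have := measure_mono_null hsub hGnull
      exact absurd this (measure_ball_pos volume c0 hδ0).ne'
    obtain ⟨y, ⟨⟨⟨hyb, hyD⟩, hyX⟩, hyc0⟩⟩ := hyex
    -- monotonicity of the subdifferential
    have hgy := grad_mem_subgrad hψ hyD
    have hmono : 0 ≤ ⟪gradient ψ y - z, y - x⟫ := by
      have h1 := hz y
      have h2 := hgy x
      have h3 : ⟪gradient ψ y, x - y⟫ = - ⟪gradient ψ y, y - x⟫ := by
        rw [← inner_neg_right]; congr 1; abel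
      rw [h3] at h2
      have h4 : ⟪gradient ψ y - z, y - x⟫ = ⟪gradient ψ y, y - x⟫ - ⟪z, y - x⟫ := by
        rw [inner_sub_left]
      linarith
    -- norm bounds
    have hyball : y ∈ closedBall (0:(EuclideanSpace ℝ (Fin d))) 1 := ball_subset_closedBall (hballsub hyc0)
    have hgynorm : ‖gradient ψ y‖ ≤ K := hKb y hyball _ hgy
    -- the decomposition
    have hdecomp : ⟪gradient ψ y - z, y - x⟫ =
        (-t) * ⟪gradient ψ y - z, v⟫ + ⟪gradient ψ y - z, y - c0⟫ := by
      have : y - x = (-t) • v + (y - c0) := by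
        rw [hc0]; module
      rw [this, inner_add_right, real_inner_smul_right]
    -- lower bound on the inner product with v
    have hgv : cc - f z ≤ ⟪gradient ψ y - z, v⟫ := by
      have h1 : ⟪gradient ψ y - z, v⟫ = f (gradient ψ y) - f z := by
        rw [inner_sub_left, real_inner_comm v (gradient ψ y), real_inner_comm v z, hfv, hfv]
      rw [h1]
      have h2 : cc < f (gradient ψ y) := hfX _ (subset_closure hyX)
      linarith
    -- error term
    have herr : ⟪gradient ψ y - z, y - c0⟫ ≤ (K + ‖z‖) * δ := by
      calc ⟪gradient ψ y - z, y - c0⟫ ≤ ‖gradient ψ y - z‖ * ‖y - c0‖ :=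
            real_inner_le_norm _ _
        _ ≤ (K + ‖z‖) * δ := by
            apply mul_le_mul
            · calc ‖gradient ψ y - z‖ ≤ ‖gradient ψ y‖ + ‖z‖ := norm_sub_le _ _
                _ ≤ K + ‖z‖ := by linarith
            · rw [← dist_eq_norm]; exact (mem_ball.1 hyc0).le.trans (le_refl δ)
            · exact norm_nonneg _
            · positivity
    have hδ2 : δ ≤ t * (cc - f z) / (2 * (K + ‖z‖ + 1)) := min_le_right _ _
    have hKz : (K + ‖z‖) * δ ≤ t * (cc - f z) / 2 := by
      have h1 : (K + ‖z‖) * δ ≤ (K + ‖z‖ + 1) * (t * (cc - f z) / (2 * (K + ‖z‖ + 1))) := by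
        apply mul_le_mul (by linarith) hδ2 hδ0.le (by positivity)
      have h2 : (K + ‖z‖ + 1) * (t * (cc - f z) / (2 * (K + ‖z‖ + 1))) = t * (cc - f z) / 2 := by
        field_simp
      linarith
    nlinarith [hmono, hdecomp, hgv, herr, hKz, mul_le_mul_of_nonneg_left hgv ht0.le]
  -- the nondifferentiability set of the localized conjugate
  set Nstar : Set (EuclideanSpace ℝ (Fin d)) := {z | ¬ DifferentiableAt ℝ (lconj ψ) z} with hNstar
  have hNmeas : MeasurableSet Nstar :=
    (measurableSet_of_differentiableAt ℝ (lconj ψ)).compl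
  have hNnull : volume Nstar = 0 := by
    have := (lconj_lipschitz hc).ae_differentiableAt (μ := volume)
    rwa [ae_iff] at this
  -- constants
  set VB : ℝ := (volume (ball (0:(EuclideanSpace ℝ (Fin d))) 1)).toReal with hVB
  have hVB0 : 0 ≤ VB := ENNReal.toReal_nonneg
  have hVBfin : volume (ball (0:(EuclideanSpace ℝ (Fin d))) 1) = ENNReal.ofReal VB :=
    (ENNReal.ofReal_toReal measure_ball_lt_top.ne).symm
  set c₂ : ℝ := (2 ^ d * VB + 1) / a with hc₂
  have hc₂0 : 0 < c₂ := by positivity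
  refine ⟨1 / (a * Lam), c₂ / lam, by positivity, by positivity, ?_⟩
  intro A hAM hAmeas
  set SA : Set (EuclideanSpace ℝ (Fin d)) := ⋃ x ∈ A, {z : (EuclideanSpace ℝ (Fin d)) | ∀ w, ψ x + ⟪z, w - x⟫ ≤ ψ w} with hSA
  have hAball : A ⊆ ball (0:(EuclideanSpace ℝ (Fin d))) 1 := fun x hx => hMball (hAM hx)
  have hSAK : SA ⊆ closedBall (0:(EuclideanSpace ℝ (Fin d))) K := by
    intro z hz
    obtain ⟨x, hxA, hzx⟩ := Set.mem_iUnion₂.1 hz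
    rw [mem_closedBall, dist_zero_right]
    exact hKb x (ball_subset_closedBall (hAball hxA)) z hzx
  have hSAR : SA ⊆ ball (0:(EuclideanSpace ℝ (Fin d))) R := fun z hz => by
    have := hSAK hz
    rw [mem_closedBall, dist_zero_right] at this
    rw [mem_ball, dist_zero_right]
    rw [hR]; linarith
  have hSAX : SA ⊆ closure X := by
    intro z hz
    obtain ⟨x, hxA, hzx⟩ := Set.mem_iUnion₂.1 hz
    exact hsubX x (hAball hxA) z hzx
  have hvolAfin : volume A ≠ ⊤ := by
    refine ne_of_lt (lt_of_le_of_lt (measure_mono hAM) hMc.measure_lt_top)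
  constructor
  · -- LOWER BOUND
    have h1 : ENNReal.ofReal (1/a) * volume A ≤ μU A := by
      rw [hμU, withDensity_apply _ hAmeas]
      calc ENNReal.ofReal (1/a) * volume A
          = ENNReal.ofReal (1/a) * volume (A \ {0}) := by
            rw [measure_diff_null (measure_singleton 0)]
        _ = ∫⁻ _ in A \ {0}, ENNReal.ofReal (1/a) ∂volume := (setLIntegral_const _ _).symm
        _ ≤ ∫⁻ x in A \ {0}, u x ∂volume := by
            refine setLIntegral_mono' (hAmeas.diff (measurableSet_singleton 0)) ?_
            intro x hx
            exact hulb x ⟨hAball hx.1, hx.2⟩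
        _ ≤ ∫⁻ x in A, u x ∂volume := lintegral_mono_set Set.diff_subset
    have h2 : μU A ≤ P SA := by
      set T1 := toMeasurable P SA with hT1
      have hT1m : MeasurableSet T1 := measurableSet_toMeasurable _ _
      have hsub : A ⊆ (gradient ψ ⁻¹' T1) ∪ (A ∩ Dᶜ) := by
        intro y hy
        by_cases hyD : y ∈ D
        · refine Or.inl ?_
          have : gradient ψ y ∈ SA := by
            refine Set.mem_iUnion₂.2 ⟨y, hy, ?_⟩
            exact grad_mem_subgrad hψ hyD
          exact subset_toMeasurable _ _ this
        · exact Or.inr ⟨hy, hyD⟩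
      have hACnull : volume (A ∩ Dᶜ) = 0 := by
        refine measure_mono_null ?_ hndiff
        intro y hy
        exact ⟨hAball hy.1, hy.2⟩
      have hμUAC : μU (A ∩ Dᶜ) = 0 := (withDensity_absolutelyContinuous volume u) hACnull
      calc μU A ≤ μU ((gradient ψ ⁻¹' T1) ∪ (A ∩ Dᶜ)) := measure_mono hsub
        _ ≤ μU (gradient ψ ⁻¹' T1) + μU (A ∩ Dᶜ) := measure_union_le _ _
        _ ≤ P T1 + 0 := add_le_add (le_of_eq (hmap _ hT1m)) (le_of_eq hμUAC)
        _ = P SA := by rw [add_zero, hT1, measure_toMeasurable]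
    have h3 : P SA ≤ ENNReal.ofReal Lam * volume SA := by
      set T2 := toMeasurable volume SA ∩ ball (0:(EuclideanSpace ℝ (Fin d))) R with hT2
      have hT2m : MeasurableSet T2 :=
        (measurableSet_toMeasurable _ _).inter measurableSet_ball
      have hsub2 : SA ⊆ T2 := fun z hz => ⟨subset_toMeasurable _ _ hz, hSAR hz⟩
      calc P SA ≤ P T2 := measure_mono hsub2
        _ = ∫⁻ x in T2, ENNReal.ofReal (p x) ∂volume := by rw [hP, withDensity_apply _ hT2m]
        _ ≤ ∫⁻ _ in T2, ENNReal.ofReal Lam ∂volume := by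
            refine setLIntegral_mono' hT2m ?_
            intro x hx
            apply ENNReal.ofReal_le_ofReal
            by_cases hxX : x ∈ X
            · exact (hbounds x ⟨hxX, hx.2⟩).2
            · rw [hp0 x hxX]; linarith
        _ = ENNReal.ofReal Lam * volume T2 := setLIntegral_const _ _
        _ ≤ ENNReal.ofReal Lam * volume (toMeasurable volume SA) := by
            gcongr
            exact Set.inter_subset_left
        _ = ENNReal.ofReal Lam * volume SA := by rw [measure_toMeasurable]
    have hchain := le_trans h1 (le_trans h2 h3)
    calc ENNReal.ofReal (1 / (a * Lam)) * volume A
        = ENNReal.ofReal (1/Lam) * (ENNReal.ofReal (1/a) * volume A) := by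
          rw [← mul_assoc, ← ENNReal.ofReal_mul (by positivity)]
          congr 2
          rw [one_div_mul_one_div, mul_comm]
      _ ≤ ENNReal.ofReal (1/Lam) * (ENNReal.ofReal Lam * volume SA) := by gcongr
      _ = (ENNReal.ofReal (1/Lam) * ENNReal.ofReal Lam) * volume SA := by rw [mul_assoc]
      _ = volume SA := by
          rw [← ENNReal.ofReal_mul (by positivity), one_div, inv_mul_cancel₀ hLam.ne',
            ENNReal.ofReal_one, one_mul]
  · -- UPPER BOUND
    -- the good target set
    set W : Set (EuclideanSpace ℝ (Fin d)) := {z | DifferentiableAt ℝ (lconj ψ) z} ∩ (gradient (lconj ψ) ⁻¹' A)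
      with hW
    have hWmeas : MeasurableSet W :=
      (measurableSet_of_differentiableAt ℝ (lconj ψ)).inter
        ((measurable_gradient (lconj ψ)) hAmeas)
    have hSAW : SA \ Nstar ⊆ W := by
      intro z hz
      obtain ⟨hzSA, hzN⟩ := hz
      obtain ⟨x, hxA, hzx⟩ := Set.mem_iUnion₂.1 hzSA
      have hdiff : DifferentiableAt ℝ (lconj ψ) z := by
        by_contra hcon; exact hzN hcon
      have hxcb : x ∈ closedBall (0:(EuclideanSpace ℝ (Fin d))) 1 := ball_subset_closedBall (hAball hxA)
      have hxsub := lconj_subgrad hc hxcb hzx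
      have hxg : x = gradient (lconj ψ) z := by
        refine subgrad_eq_gradient hdiff ?_
        intro z'
        have := hxsub z'
        linarith
      exact ⟨hdiff, by rw [Set.mem_preimage, ← hxg]; exact hxA⟩
    set T0 := toMeasurable P (SA \ Nstar) ∩ W with hT0
    have hT0m : MeasurableSet T0 := (measurableSet_toMeasurable _ _).inter hWmeas
    have hsub0 : SA \ Nstar ⊆ T0 := fun z hz => ⟨subset_toMeasurable _ _ hz, hSAW hz⟩
    -- step 1 : λ · vol SA ≤ P T0
    have step1 : ENNReal.ofReal lam * volume SA ≤ P T0 := by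
      have hv1 : volume SA ≤ volume ((SA \ Nstar) ∩ (X ∩ ball (0:(EuclideanSpace ℝ (Fin d))) R)) := by
        have hsp : SA ⊆ ((SA \ Nstar) ∩ (X ∩ ball (0:(EuclideanSpace ℝ (Fin d))) R)) ∪ Nstar ∪ (closure X \ X) := by
          intro z hz
          by_cases hzN : z ∈ Nstar
          · exact Or.inl (Or.inr hzN)
          by_cases hzX : z ∈ X
          · exact Or.inl (Or.inl ⟨⟨hz, hzN⟩, hzX, hSAR hz⟩)
          · exact Or.inr ⟨hSAX hz, hzX⟩
        have hfr : volume (closure X \ X) = 0 := by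
          refine measure_mono_null ?_ (hXconv.addHaar_frontier volume)
          intro z hz
          rw [frontier, hXo.interior_eq]
          exact ⟨hz.1, hz.2⟩
        calc volume SA ≤ volume (((SA \ Nstar) ∩ (X ∩ ball (0:(EuclideanSpace ℝ (Fin d))) R)) ∪ Nstar ∪
              (closure X \ X)) := measure_mono hsp
          _ ≤ volume (((SA \ Nstar) ∩ (X ∩ ball (0:(EuclideanSpace ℝ (Fin d))) R)) ∪ Nstar) +
              volume (closure X \ X) := measure_union_le _ _
          _ ≤ (volume ((SA \ Nstar) ∩ (X ∩ ball (0:(EuclideanSpace ℝ (Fin d))) R)) + volume Nstar) + 0 := by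
              gcongr
              · exact measure_union_le _ _
              · exact le_of_eq hfr
          _ = volume ((SA \ Nstar) ∩ (X ∩ ball (0:(EuclideanSpace ℝ (Fin d))) R)) := by rw [hNnull, add_zero, add_zero]
      have hv2 : volume ((SA \ Nstar) ∩ (X ∩ ball (0:(EuclideanSpace ℝ (Fin d))) R)) ≤
          volume (T0 ∩ (X ∩ ball (0:(EuclideanSpace ℝ (Fin d))) R)) := by
        apply measure_mono
        intro z hz
        exact ⟨hsub0 hz.1, hz.2⟩
      have hv3 : ENNReal.ofReal lam * volume (T0 ∩ (X ∩ ball (0:(EuclideanSpace ℝ (Fin d))) R)) ≤ P T0 := by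
        have hTXm : MeasurableSet (T0 ∩ (X ∩ ball (0:(EuclideanSpace ℝ (Fin d))) R)) :=
          hT0m.inter (hXo.measurableSet.inter measurableSet_ball)
        calc ENNReal.ofReal lam * volume (T0 ∩ (X ∩ ball (0:(EuclideanSpace ℝ (Fin d))) R))
            = ∫⁻ _ in T0 ∩ (X ∩ ball (0:(EuclideanSpace ℝ (Fin d))) R), ENNReal.ofReal lam ∂volume :=
              (setLIntegral_const _ _).symm
          _ ≤ ∫⁻ x in T0 ∩ (X ∩ ball (0:(EuclideanSpace ℝ (Fin d))) R), ENNReal.ofReal (p x) ∂volume := by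
              refine setLIntegral_mono' hTXm ?_
              intro x hx
              exact ENNReal.ofReal_le_ofReal (hbounds x hx.2).1
          _ ≤ ∫⁻ x in T0, ENNReal.ofReal (p x) ∂volume :=
              lintegral_mono_set Set.inter_subset_left
          _ = P T0 := by rw [hP, withDensity_apply _ hT0m]
      calc ENNReal.ofReal lam * volume SA
          ≤ ENNReal.ofReal lam * volume (T0 ∩ (X ∩ ball (0:(EuclideanSpace ℝ (Fin d))) R)) :=
            mul_le_mul_right (le_trans hv1 hv2) _
        _ ≤ P T0 := hv3
    -- step 2 : P T0 ≤ μU A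
    have step2 : P T0 ≤ μU A := by
      rw [← hmap _ hT0m]
      have hsub : gradient ψ ⁻¹' T0 ⊆
          A ∪ ((ball (0:(EuclideanSpace ℝ (Fin d))) 1)ᶜ ∪ (ball (0:(EuclideanSpace ℝ (Fin d))) 1 ∩ Dᶜ)) := by
        intro y hy
        by_cases hyb : y ∈ ball (0:(EuclideanSpace ℝ (Fin d))) 1
        · by_cases hyD : y ∈ D
          · left
            have hzW : gradient ψ y ∈ W := hy.2
            have hgy := grad_mem_subgrad hψ hyD
            have hysub := lconj_subgrad hc (ball_subset_closedBall hyb) hgy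
            have : y = gradient (lconj ψ) (gradient ψ y) := by
              refine subgrad_eq_gradient hzW.1 ?_
              intro z'
              have := hysub z'
              linarith
            rw [this]
            exact hzW.2
          · exact Or.inr (Or.inr ⟨hyb, hyD⟩)
        · exact Or.inr (Or.inl hyb)
      have hμUball : μU ((ball (0:(EuclideanSpace ℝ (Fin d))) 1)ᶜ) = 0 := by
        rw [hμU, withDensity_apply _ measurableSet_ball.compl]
        refine le_antisymm ?_ zero_le
        calc ∫⁻ x in (ball (0:(EuclideanSpace ℝ (Fin d))) 1)ᶜ, u x ∂volume
            ≤ ∫⁻ _ in (ball (0:(EuclideanSpace ℝ (Fin d))) 1)ᶜ, (0:ℝ≥0∞) ∂volume := by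
              refine setLIntegral_mono' measurableSet_ball.compl ?_
              intro x hx
              rw [huz x (fun hc' => hx hc'.1)]
          _ = 0 := by simp
      have hμUD : μU (ball (0:(EuclideanSpace ℝ (Fin d))) 1 ∩ Dᶜ) = 0 :=
        (withDensity_absolutelyContinuous volume u) hndiff
      calc μU (gradient ψ ⁻¹' T0)
          ≤ μU (A ∪ ((ball (0:(EuclideanSpace ℝ (Fin d))) 1)ᶜ ∪ (ball (0:(EuclideanSpace ℝ (Fin d))) 1 ∩ Dᶜ))) := measure_mono hsub
        _ ≤ μU A + (μU ((ball (0:(EuclideanSpace ℝ (Fin d))) 1)ᶜ) + μU (ball (0:(EuclideanSpace ℝ (Fin d))) 1 ∩ Dᶜ)) := by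
            refine le_trans (measure_union_le _ _) ?_
            gcongr
            exact measure_union_le _ _
        _ = μU A := by rw [hμUball, hμUD, add_zero, add_zero]
    -- step 3 : μU A ≤ ofReal (c₂ ρ) when vol A > 0
    by_cases hA0 : volume A = 0
    · have : ENNReal.ofReal lam * volume SA ≤ 0 := by
        refine le_trans step1 (le_trans step2 ?_)
        rw [hμU, withDensity_apply _ hAmeas]
        rw [Measure.restrict_eq_zero.2 hA0]
        simp
      have hSA0 : volume SA = 0 := by
        have := le_antisymm this zero_le
        rcases mul_eq_zero.1 this with h | h
        · exact absurd h (by simp [ENNReal.ofReal_eq_zero]; positivity)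
        · exact h
      rw [hSA0, hA0]
      simp
    · set ρ : ℝ := (volume A).toReal ^ ((1:ℝ)/d) with hρ
      have htR0 : 0 < (volume A).toReal := ENNReal.toReal_pos hA0 hvolAfin
      have hρ0 : 0 < ρ := Real.rpow_pos_of_pos htR0 _
      have hρd : ρ ^ d = (volume A).toReal := by
        rw [hρ, ← Real.rpow_natCast ((volume A).toReal ^ ((1:ℝ)/d)) d,
          ← Real.rpow_mul htR0.le]
        rw [one_div]
        rw [inv_mul_cancel₀ (Nat.cast_ne_zero.2 (by omega) : (d:ℝ) ≠ 0)]
        exact Real.rpow_one _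
      have hvolA : volume A = ENNReal.ofReal (ρ ^ d) := by
        rw [hρd, ENNReal.ofReal_toReal hvolAfin]
      have step3 : μU A ≤ ENNReal.ofReal (c₂ * ρ) := by
        rw [hμU, withDensity_apply _ hAmeas]
        have hsplit : ∫⁻ x in A, u x ∂volume ≤
            (∫⁻ x in A ∩ ball (0:(EuclideanSpace ℝ (Fin d))) ρ, u x ∂volume) +
              ∫⁻ x in A \ ball (0:(EuclideanSpace ℝ (Fin d))) ρ, u x ∂volume := by
          calc ∫⁻ x in A, u x ∂volume
              ≤ ∫⁻ x in (A ∩ ball (0:(EuclideanSpace ℝ (Fin d))) ρ) ∪ (A \ ball (0:(EuclideanSpace ℝ (Fin d))) ρ), u x ∂volume := by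
                apply lintegral_mono_set
                intro x hx
                by_cases h : x ∈ ball (0:(EuclideanSpace ℝ (Fin d))) ρ
                · exact Or.inl ⟨hx, h⟩
                · exact Or.inr ⟨hx, h⟩
            _ ≤ _ := lintegral_union_le _ _ _
        have hfirst : ∫⁻ x in A ∩ ball (0:(EuclideanSpace ℝ (Fin d))) ρ, u x ∂volume ≤
            ENNReal.ofReal (2 ^ d * VB / a * ρ) := by
          calc ∫⁻ x in A ∩ ball (0:(EuclideanSpace ℝ (Fin d))) ρ, u x ∂volume
              ≤ ∫⁻ x in A ∩ ball (0:(EuclideanSpace ℝ (Fin d))) ρ,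
                  ENNReal.ofReal (1 / (a * ‖x‖ ^ (d - 1))) ∂volume :=
                setLIntegral_mono' (hAmeas.inter measurableSet_ball) (fun x _ => huub x)
            _ ≤ ∫⁻ x in ball (0:(EuclideanSpace ℝ (Fin d))) ρ,
                  ENNReal.ofReal (1 / (a * ‖x‖ ^ (d - 1))) ∂volume :=
                lintegral_mono_set Set.inter_subset_right
            _ ≤ ENNReal.ofReal (2 ^ d * ρ / a) * volume (ball (0:(EuclideanSpace ℝ (Fin d))) 1) :=
                radial_bound hd ha0 hρ0
            _ = ENNReal.ofReal (2 ^ d * VB / a * ρ) := by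
                rw [hVBfin, ← ENNReal.ofReal_mul (by positivity)]
                congr 1
                ring
        have hsecond : ∫⁻ x in A \ ball (0:(EuclideanSpace ℝ (Fin d))) ρ, u x ∂volume ≤
            ENNReal.ofReal (ρ / a) := by
          have hptwise : ∀ x ∈ A \ ball (0:(EuclideanSpace ℝ (Fin d))) ρ,
              u x ≤ ENNReal.ofReal (1 / (a * ρ ^ (d - 1))) := by
            intro x hx
            refine le_trans (huub x) (ENNReal.ofReal_le_ofReal ?_)
            have hxρ : ρ ≤ ‖x‖ := by
              have := hx.2
              rw [mem_ball, dist_zero_right] at this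
              linarith [not_lt.1 this]
            rw [one_div, one_div]
            apply inv_anti₀ (by positivity)
            have : ρ ^ (d-1) ≤ ‖x‖ ^ (d-1) := pow_le_pow_left₀ hρ0.le hxρ _
            nlinarith
          calc ∫⁻ x in A \ ball (0:(EuclideanSpace ℝ (Fin d))) ρ, u x ∂volume
              ≤ ∫⁻ _ in A \ ball (0:(EuclideanSpace ℝ (Fin d))) ρ, ENNReal.ofReal (1 / (a * ρ ^ (d - 1))) ∂volume :=
                setLIntegral_mono' (hAmeas.diff measurableSet_ball) hptwise
            _ = ENNReal.ofReal (1 / (a * ρ ^ (d - 1))) * volume (A \ ball (0:(EuclideanSpace ℝ (Fin d))) ρ) :=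
                setLIntegral_const _ _
            _ ≤ ENNReal.ofReal (1 / (a * ρ ^ (d - 1))) * volume A := by
                gcongr
                exact Set.diff_subset
            _ = ENNReal.ofReal (ρ / a) := by
                rw [hvolA, ← ENNReal.ofReal_mul (by positivity)]
                congr 1
                have he : d = (d - 1) + 1 := by omega
                rw [he, pow_succ]
                have hρe : ρ ^ (d-1) ≠ 0 := (pow_pos hρ0 _).ne'
                field_simp
                ring_nf
                rw [Nat.add_sub_cancel_left]
        calc ∫⁻ x in A, u x ∂volume
            ≤ ENNReal.ofReal (2 ^ d * VB / a * ρ) + ENNReal.ofReal (ρ / a) :=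
              le_trans hsplit (add_le_add hfirst hsecond)
          _ = ENNReal.ofReal (c₂ * ρ) := by
              rw [← ENNReal.ofReal_add (by positivity) (by positivity)]
              congr 1
              rw [hc₂]
              field_simp
      -- combine
      have hcomb : ENNReal.ofReal lam * volume SA ≤ ENNReal.ofReal (c₂ * ρ) :=
        le_trans step1 (le_trans step2 step3)
      have hρA : ENNReal.ofReal ρ = volume A ^ ((1:ℝ)/d) := by
        rw [hρ, ← ENNReal.ofReal_rpow_of_pos htR0, ENNReal.ofReal_toReal hvolAfin]
      calc volume SA
          = ENNReal.ofReal (1/lam) * (ENNReal.ofReal lam * volume SA) := by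
            rw [← mul_assoc, ← ENNReal.ofReal_mul (by positivity), one_div,
              inv_mul_cancel₀ hlam.ne', ENNReal.ofReal_one, one_mul]
        _ ≤ ENNReal.ofReal (1/lam) * ENNReal.ofReal (c₂ * ρ) := by gcongr
        _ = ENNReal.ofReal (c₂ / lam) * ENNReal.ofReal ρ := by
            rw [← ENNReal.ofReal_mul (by positivity), ← ENNReal.ofReal_mul (by positivity)]
            congr 1
            field_simp
        _ = ENNReal.ofReal (c₂ / lam) * volume A ^ ((1:ℝ)/d) := by rw [hρA]
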